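/- Let G be a finitely generated metabelian group with decomposition 0 → M → G → A → 1 (A finitely generated abelian), Iₙ = ker(Z[A] → Z/n), and let γᵢ^[n](G) be the n-lower central series. Let T be such that a^(n^(T+1)) = 1 implies a^(n^T) = 1 for a ∈ A. Then for all i ≥ 0: M·Iₙⁱ ⊆ γ^[n]_{i+1}(G) ∩ M and γ^[n]_{2i+T+1}(G) ∩ M ⊆ M·Iₙⁱ. -/

import Mathlib

/-- `𝒫ₙ(H) = pₙ(H)·[H,G]`: the normal subgroup generated by `n`-th powers of
elements of `H` together with the commutator `[H,G]`. -/
def Pn {G : Type*} [Group G] (n : ℕ) (H : Subgroup G) : Subgroup G :=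
  Subgroup.normalClosure {x | ∃ h ∈ H, x = h ^ n} ⊔ ⁅H, (⊤ : Subgroup G)⁆

/-- The `n`-lower central series: `γ₁^[n](G) = G`, `γ^[n]_{i+1}(G) = 𝒫ₙ(γᵢ^[n](G))`.
Here `gammaN n i = γ^[n]_{i+1}(G)` (zero-based indexing). -/
def gammaN {G : Type*} [Group G] (n : ℕ) : ℕ → Subgroup G
  | 0 => ⊤
  | i + 1 => Pn n (gammaN n i)

/-- `M·Iₙⁱ`, realized group-theoretically via `N·Iₙ = 𝒫ₙ(N)`:
`MIn n M 0 = M` and `MIn n M (i+1) = 𝒫ₙ(MIn n M i)`. -/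
def MIn {G : Type*} [Group G] (n : ℕ) (M : Subgroup G) : ℕ → Subgroup G
  | 0 => M
  | i + 1 => Pn n (MIn n M i)

open scoped commutatorElement

section Aux

open Subgroup

variable {G : Type*} [Group G] {n : ℕ}

lemma pow_mem_Pn {H : Subgroup G} {h : G} (hh : h ∈ H) : h ^ n ∈ Pn n H :=
  le_sup_left (α := Subgroup G) (Subgroup.subset_normalClosure ⟨h, hh, rfl⟩)

lemma commutator_mem_Pn {H : Subgroup G} {h : G} (hh : h ∈ H) (g : G) :
    ⁅h, g⁆ ∈ Pn n H :=
  le_sup_right (α := Subgroup G)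
    (Subgroup.commutator_mem_commutator hh (Subgroup.mem_top g))

lemma Pn_le {H K : Subgroup G} (hK : K.Normal)
    (h1 : ∀ h ∈ H, h ^ n ∈ K) (h2 : ∀ h ∈ H, ∀ g : G, ⁅h, g⁆ ∈ K) :
    Pn n H ≤ K := by
  haveI := hK
  refine sup_le (Subgroup.normalClosure_le_normal ?_)
    (Subgroup.commutator_le.2 fun a ha b _ => h2 a ha b)
  rintro x ⟨h, hh, rfl⟩
  exact h1 h hh

lemma Pn_mono {H K : Subgroup G} (h : H ≤ K) : Pn n H ≤ Pn n K := by
  refine sup_le (le_trans (Subgroup.normalClosure_mono ?_) le_sup_left)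
    (le_trans (Subgroup.commutator_mono h le_rfl) le_sup_right)
  rintro x ⟨a, ha, rfl⟩
  exact ⟨a, h ha, rfl⟩

lemma Pn_normal (H : Subgroup G) [H.Normal] : (Pn n H).Normal :=
  Subgroup.sup_normal _ _

lemma Pn_le_self {H : Subgroup G} (hH : H.Normal) : Pn n H ≤ H := by
  refine Pn_le hH (fun h hh => H.pow_mem hh n) (fun h hh g => ?_)
  have : ⁅h, g⁆ = h * (g * h⁻¹ * g⁻¹) := by group
  rw [this]
  exact H.mul_mem hh (hH.conj_mem _ (H.inv_mem hh) g)

lemma two_mul_choose_two (k : ℕ) : 2 * k.choose 2 = k * (k - 1) := by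
  induction k with
  | zero => simp
  | succ k ih =>
    rw [Nat.choose_succ_succ, Nat.choose_one_right, Nat.mul_add, ih,
      Nat.add_sub_cancel]
    cases k with
    | zero => simp
    | succ j =>
      rw [Nat.succ_sub_one]
      ring

lemma dvd_choose_sq (n : ℕ) : n ∣ (n ^ 2).choose 2 := by
  have h2 : 2 * (n ^ 2).choose 2 = n ^ 2 * (n ^ 2 - 1) := two_mul_choose_two _
  rcases Nat.even_or_odd n with ⟨s, hs⟩ | hodd
  · refine ⟨s * (n ^ 2 - 1), ?_⟩
    refine Nat.eq_of_mul_eq_mul_left (by norm_num) (h2.trans ?_)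
    subst hs; ring
  · obtain ⟨u, hu⟩ := (hodd.pow (n := 2))
    refine ⟨n * u, ?_⟩
    refine Nat.eq_of_mul_eq_mul_left (show 0 < 2 by norm_num) (h2.trans ?_)
    have : n ^ 2 - 1 = 2 * u := by omega
    rw [this]; ring

lemma pow_mul_comm_aux {Q : Type*} [Group Q] {x y c : Q}
    (hc : ∀ z : Q, Commute c z) (h : y * x = x * y * c) (k : ℕ) :
    y ^ k * x = x * y ^ k * c ^ k := by
  induction k with
  | zero => simp
  | succ k ih =>
    have h1 : y ^ (k + 1) * x = y * (y ^ k * x) := by rw [pow_succ']; group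
    rw [h1, ih, ← mul_assoc, ← mul_assoc, h]
    have h2 : c * y ^ k = y ^ k * c := (hc _).eq
    calc x * y * c * y ^ k * c ^ k = x * y * (c * y ^ k) * c ^ k := by group
      _ = x * y * (y ^ k * c) * c ^ k := by rw [h2]
      _ = x * y ^ (k + 1) * c ^ (k + 1) := by rw [pow_succ', pow_succ']; group

lemma pow_mul_formula {Q : Type*} [Group Q] {x y c : Q}
    (hc : ∀ z : Q, Commute c z) (h : y * x = x * y * c) (k : ℕ) :
    (x * y) ^ k = x ^ k * y ^ k * c ^ (k.choose 2) := by
  induction k with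
  | zero => simp
  | succ k ih =>
    have hC : (k + 1).choose 2 = k.choose 2 + k := by
      have h := Nat.choose_succ_succ k 1
      rw [Nat.choose_one_right] at h
      norm_num at h
      omega
    have hmv : ∀ z : Q, c ^ k.choose 2 * z = z * c ^ k.choose 2 :=
      fun z => ((hc z).pow_left _).eq
    calc (x * y) ^ (k + 1) = (x * y) ^ k * (x * y) := by rw [pow_succ]
      _ = x ^ k * y ^ k * (c ^ k.choose 2 * (x * y)) := by rw [ih]; group
      _ = x ^ k * y ^ k * (x * y * c ^ k.choose 2) := by rw [hmv]
      _ = x ^ k * (y ^ k * x) * y * c ^ k.choose 2 := by group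
      _ = x ^ k * (x * y ^ k * c ^ k) * y * c ^ k.choose 2 := by
          rw [pow_mul_comm_aux hc h]
      _ = x ^ (k + 1) * y ^ k * (c ^ k * y) * c ^ k.choose 2 := by
          rw [pow_succ']; group
      _ = x ^ (k + 1) * y ^ k * (y * c ^ k) * c ^ k.choose 2 := by
          rw [((hc y).pow_left k).eq]
      _ = x ^ (k + 1) * y ^ (k + 1) * c ^ ((k + 1).choose 2) := by
          rw [hC, pow_succ' y, pow_add]; group

lemma commutator_mul_left_aux {Q : Type*} [Group Q] (a b z : Q) :
    ⁅a * b, z⁆ = a * ⁅b, z⁆ * a⁻¹ * ⁅a, z⁆ := by group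

lemma commutator_pow_left_central {Q : Type*} [Group Q] {x z : Q}
    (hc : ∀ w : Q, Commute ⁅x, z⁆ w) (k : ℕ) :
    ⁅x ^ k, z⁆ = ⁅x, z⁆ ^ k := by
  induction k with
  | zero => simp
  | succ k ih =>
    have h1 : x ^ (k + 1) = x * x ^ k := by rw [pow_succ']
    rw [h1, commutator_mul_left_aux, ih, ((hc x).pow_left k).symm.eq, pow_succ]
    group

lemma commutator_central_mul {Q : Type*} [Group Q] {x c z : Q}
    (hc : ∀ w : Q, Commute c w) : ⁅x * c, z⁆ = ⁅x, z⁆ := by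
  rw [commutator_mul_left_aux, commutatorElement_eq_one_iff_commute.2 (hc z)]
  group

end Aux

section Key

open Subgroup

variable {G : Type*} [Group G]

/-- The key lemma: two steps of the `n`-lower-central operation starting from a normal
subgroup `H`, intersected with `M`, land in one step applied to `H ⊓ M`. -/
lemma keyL (n : ℕ) (M : Subgroup G) [M.Normal]
    (hder : ⁅(⊤ : Subgroup G), (⊤ : Subgroup G)⁆ ≤ M)
    (H : Subgroup G) (hHn : H.Normal)
    (hHM : ∀ k ∈ Pn n H, ∃ h ∈ H,
      (QuotientGroup.mk' M) k = ((QuotientGroup.mk' M) h) ^ n)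
    (hTH : ∀ h ∈ H, ((QuotientGroup.mk' M) h) ^ (n ^ 2) = 1 → h ∈ M) :
    Pn n (Pn n H) ⊓ M ≤ Pn n (H ⊓ M) := by
  haveI := hHn
  set π := QuotientGroup.mk' M with hπdef
  set P := Pn n (H ⊓ M) with hPdef
  haveI hPnorm : P.Normal := Pn_normal _
  set ρ := QuotientGroup.mk' P with hρdef
  have hker : ∀ x : G, ρ x = 1 ↔ x ∈ P := fun x => QuotientGroup.eq_one_iff x
  have hπker : ∀ x : G, π x = 1 ↔ x ∈ M := fun x => QuotientGroup.eq_one_iff x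
  -- c1 : images of H ⊓ M are central in G ⧸ P
  have c1 : ∀ m ∈ H ⊓ M, ∀ q : G ⧸ P, Commute (ρ m) q := by
    intro m hm q
    induction q using QuotientGroup.induction_on with
    | H g =>
      have : ρ ⁅m, g⁆ = 1 := (hker _).2 (commutator_mem_Pn hm g)
      rw [map_commutatorElement] at this
      exact commutatorElement_eq_one_iff_commute.1 this
  -- c2 : images of H ⊓ M have exponent n in G ⧸ P
  have c2 : ∀ m ∈ H ⊓ M, (ρ m) ^ n = 1 := by
    intro m hm
    rw [← map_pow]
    exact (hker _).2 (pow_mem_Pn hm)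
  -- c3 : commutators of H with G lie in H ⊓ M
  have c3 : ∀ h ∈ H, ∀ g : G, ⁅h, g⁆ ∈ H ⊓ M := by
    intro h hh g
    refine Subgroup.mem_inf.2 ⟨?_, hder (commutator_mem_commutator (mem_top h) (mem_top g))⟩
    have : ⁅h, g⁆ = h * (g * h⁻¹ * g⁻¹) := by group
    rw [this]
    exact H.mul_mem hh (hHn.conj_mem _ (H.inv_mem hh) g)
  -- the subgroup of (n^2)-th powers of H in G ⧸ P
  have Smul : ∀ h₁ ∈ H, ∀ h₂ ∈ H,
      (ρ h₁) ^ (n ^ 2) * (ρ h₂) ^ (n ^ 2) = (ρ (h₁ * h₂)) ^ (n ^ 2) := by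
    intro h₁ hh₁ h₂ hh₂
    set x := ρ h₁
    set y := ρ h₂
    have hcmem : ⁅h₂⁻¹, h₁⁻¹⁆ ∈ H ⊓ M := c3 _ (H.inv_mem hh₂) _
    set c := ρ ⁅h₂⁻¹, h₁⁻¹⁆ with hcdef
    have hc : ∀ z : G ⧸ P, Commute c z := c1 _ hcmem
    have hcn : c ^ n = 1 := c2 _ hcmem
    have hcval : c = y⁻¹ * x⁻¹ * y * x := by
      rw [hcdef, map_commutatorElement, map_inv, map_inv]
      group
      rfl
    have h : y * x = x * y * c := by rw [hcval]; group
    have hchoose : c ^ ((n ^ 2).choose 2) = 1 := by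
      obtain ⟨t, ht⟩ := dvd_choose_sq n
      rw [ht, pow_mul, hcn, one_pow]
    have := pow_mul_formula hc h (n ^ 2)
    rw [hchoose, mul_one] at this
    rw [map_mul, this]
  have Sexists : ∃ S : Subgroup (G ⧸ P),
      (∀ q, q ∈ S ↔ ∃ h ∈ H, q = (ρ h) ^ (n ^ 2)) ∧ S.Normal := by
    refine ⟨{ carrier := {q | ∃ h ∈ H, q = (ρ h) ^ (n ^ 2)}
              one_mem' := ⟨1, H.one_mem, by simp⟩
              mul_mem' := ?_
              inv_mem' := ?_ }, fun q => Iff.rfl, ?_⟩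
    · rintro a b ⟨h₁, hh₁, rfl⟩ ⟨h₂, hh₂, rfl⟩
      exact ⟨h₁ * h₂, H.mul_mem hh₁ hh₂, Smul h₁ hh₁ h₂ hh₂⟩
    · rintro a ⟨h, hh, rfl⟩
      exact ⟨h⁻¹, H.inv_mem hh, by rw [map_inv, inv_pow]⟩
    · constructor
      rintro q ⟨h, hh, rfl⟩ w
      induction w using QuotientGroup.induction_on with
      | H g =>
        refine ⟨g * h * g⁻¹, hHn.conj_mem _ hh g, ?_⟩
        rw [map_mul, map_mul, map_inv, conj_pow]
        rfl
  obtain ⟨S, hSmem, hSnorm⟩ := Sexists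
  set D := Subgroup.comap ρ S with hDdef
  have hDnorm : D.Normal := hSnorm.comap ρ
  -- every k ∈ Pn n H decomposes as h^n * m with m ∈ H ⊓ M
  have hdecomp : ∀ k ∈ Pn n H, ∃ h ∈ H, ∃ m ∈ H ⊓ M, k = h ^ n * m := by
    intro k hk
    obtain ⟨h, hh, hπk⟩ := hHM k hk
    refine ⟨h, hh, (h ^ n)⁻¹ * k, ?_, by group⟩
    refine Subgroup.mem_inf.2 ⟨H.mul_mem (H.inv_mem (H.pow_mem hh n))
      (Pn_le_self hHn hk), ?_⟩
    rw [← hπker]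
    rw [map_mul, map_inv, map_pow, hπk]
    group
  have claim1 : Pn n (Pn n H) ≤ D := by
    refine Pn_le hDnorm ?_ ?_
    · intro k hk
      obtain ⟨h, hh, m, hm, hkeq⟩ := hdecomp k hk
      have hcom : Commute (ρ (h ^ n)) (ρ m) := (c1 m hm _).symm
      have : ρ (k ^ n) = (ρ h) ^ (n ^ 2) := by
        rw [map_pow, hkeq, map_mul, hcom.mul_pow, c2 m hm, mul_one,
          ← map_pow, ← map_pow, ← pow_mul, ← pow_two]
      exact Subgroup.mem_comap.2 (by rw [this]; exact (hSmem _).2 ⟨h, hh, rfl⟩)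
    · intro k hk g
      obtain ⟨h, hh, m, hm, hkeq⟩ := hdecomp k hk
      have hρk : ρ ⁅k, g⁆ = 1 := by
        rw [map_commutatorElement, hkeq, map_mul]
        rw [commutator_central_mul (c1 m hm)]
        have hcent : ∀ w : G ⧸ P, Commute ⁅ρ h, ρ g⁆ w := by
          intro w
          rw [← map_commutatorElement]
          exact c1 _ (c3 h hh g) w
        rw [map_pow, commutator_pow_left_central hcent, ← map_commutatorElement,
          c2 _ (c3 h hh g)]
      exact Subgroup.mem_comap.2 (by rw [hρk]; exact S.one_mem)
  have hPleM : P ≤ M := by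
    refine Pn_le (inferInstance : M.Normal) ?_ ?_
    · intro h hh
      exact M.pow_mem (Subgroup.mem_inf.1 hh).2 n
    · intro h _ g
      exact hder (commutator_mem_commutator (mem_top h) (mem_top g))
  have claim2 : D ⊓ M ≤ P := by
    rintro x hx
    obtain ⟨hxD, hxM⟩ := Subgroup.mem_inf.1 hx
    obtain ⟨h, hh, hxval⟩ := (hSmem _).1 (Subgroup.mem_comap.1 hxD)
    have hPmem : h ^ (n ^ 2) * x⁻¹ ∈ P := by
      rw [← hker]
      rw [map_mul, map_inv, map_pow, hxval]
      group
    have hhM : h ∈ M := by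
      refine hTH h hh ?_
      have h1 : h ^ (n ^ 2) ∈ M := by
        have := M.mul_mem (hPleM hPmem) hxM
        have heq : h ^ (n ^ 2) * x⁻¹ * x = h ^ (n ^ 2) := by group
        rwa [heq] at this
      rw [← map_pow]
      exact (hπker _).2 h1
    have hhHM : h ∈ H ⊓ M := Subgroup.mem_inf.2 ⟨hh, hhM⟩
    have hpowP : h ^ (n ^ 2) ∈ P := by
      have : h ^ (n ^ 2) = (h ^ n) ^ n := by rw [← pow_mul, pow_two]
      rw [this]
      exact pow_mem_Pn ((H ⊓ M).pow_mem hhHM n)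
    have : x = (h ^ (n ^ 2) * x⁻¹)⁻¹ * h ^ (n ^ 2) := by group
    rw [this]
    exact P.mul_mem (P.inv_mem hPmem) hpowP
  intro x hx
  obtain ⟨hx1, hx2⟩ := Subgroup.mem_inf.1 hx
  exact claim2 (Subgroup.mem_inf.2 ⟨claim1 hx1, hx2⟩)

end Key

/-- Let `G` be a finitely generated metabelian group with decomposition
`0 → M → G → A → 1` (`A = G/M` finitely generated abelian), `Iₙ = ker(ℤ[A] → ℤ/n)`,
and let `γᵢ^[n](G)` be the `n`-lower central series. Let `T` be such that
`a^(n^(T+1)) = 1` implies `a^(n^T) = 1` for `a ∈ A`. Then for all `i ≥ 0`: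
`M·Iₙⁱ ⊆ γ^[n]_{i+1}(G) ∩ M` and `γ^[n]_{2i+T+1}(G) ∩ M ⊆ M·Iₙⁱ`.
(`γ^[n]_{i+1}(G) = gammaN n i` and `M·Iₙⁱ = MIn n M i` in the notation above.) -/
theorem stmt13 (G : Type*) [Group G] [Group.FG G] (n : ℕ) (hn : 1 ≤ n)
    (M : Subgroup G) [M.Normal]
    (hab : ∀ x ∈ M, ∀ y ∈ M, x * y = y * x)
    (hder : ⁅(⊤ : Subgroup G), (⊤ : Subgroup G)⁆ ≤ M)
    (T : ℕ) (hT : ∀ a : G ⧸ M, a ^ n ^ (T + 1) = 1 → a ^ n ^ T = 1)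
    (i : ℕ) :
    MIn n M i ≤ gammaN n i ⊓ M ∧ gammaN n (2 * i + T) ⊓ M ≤ MIn n M i := by
  set π := QuotientGroup.mk' M with hπdef
  have hπker : ∀ x : G, π x = 1 ↔ x ∈ M := fun x => QuotientGroup.eq_one_iff x
  -- commutativity of the quotient
  have hcommA : ∀ a b : G ⧸ M, a * b = b * a := by
    intro a b
    induction a using QuotientGroup.induction_on with
    | H g =>
      induction b using QuotientGroup.induction_on with
      | H h =>
        have h1 : ((g * h : G) : G ⧸ M) = ((h * g : G) : G ⧸ M) := by
          rw [QuotientGroup.eq]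
          have : (g * h)⁻¹ * (h * g) = ⁅h⁻¹, g⁻¹⁆ := by group
          rw [this]
          exact hder (Subgroup.commutator_mem_commutator (Subgroup.mem_top _)
            (Subgroup.mem_top _))
        simpa using h1
  -- stabilization of n-power torsion
  have hstab : ∀ d : ℕ, ∀ a : G ⧸ M, a ^ n ^ (T + d) = 1 → a ^ n ^ T = 1 := by
    intro d
    induction d with
    | zero => intro a ha; simpa using ha
    | succ d ih =>
      intro a ha
      have hb : (a ^ n ^ d) ^ n ^ (T + 1) = 1 := by
        rw [← pow_mul, ← pow_add]
        have : d + (T + 1) = T + (d + 1) := by omega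
        rw [this]; exact ha
      have hb2 : (a ^ n ^ d) ^ n ^ T = 1 := hT _ hb
      rw [← pow_mul, ← pow_add] at hb2
      have : d + T = T + d := by omega
      rw [this] at hb2
      exact ih a hb2
  -- normality of the series
  have hgammaNorm : ∀ j, (gammaN n j : Subgroup G).Normal := by
    intro j
    induction j with
    | zero => exact (inferInstance : (⊤ : Subgroup G).Normal)
    | succ j ih =>
      haveI := ih
      exact Pn_normal _
  -- image of gammaN n j consists of n^j-th powers
  have hgamma : ∀ j, ∀ x ∈ (gammaN n j : Subgroup G), ∃ b : G ⧸ M, π x = b ^ n ^ j := by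
    intro j
    induction j with
    | zero => intro x _; exact ⟨π x, by rw [pow_zero, pow_one]⟩
    | succ j ih =>
      have hBex : ∃ B : Subgroup (G ⧸ M),
          (∀ q, q ∈ B ↔ ∃ b, q = b ^ n ^ (j + 1)) ∧ B.Normal := by
        refine ⟨{ carrier := {q | ∃ b, q = b ^ n ^ (j + 1)}
                  one_mem' := ⟨1, (one_pow _).symm⟩
                  mul_mem' := ?_
                  inv_mem' := ?_ }, fun q => Iff.rfl, ?_⟩
        · rintro a a' ⟨b, rfl⟩ ⟨b', rfl⟩
          exact ⟨b * b', ((show Commute b b' from hcommA b b').mul_pow _).symm⟩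
        · rintro a ⟨b, rfl⟩
          exact ⟨b⁻¹, (inv_pow b _).symm⟩
        · constructor
          rintro q ⟨b, rfl⟩ g
          have : g * b ^ n ^ (j + 1) * g⁻¹ = b ^ n ^ (j + 1) := by
            rw [hcommA g _, mul_inv_cancel_right]
          rw [this]
          exact ⟨b, rfl⟩
      obtain ⟨B, hBmem, hBnorm⟩ := hBex
      intro x hx
      have hle : (gammaN n (j + 1) : Subgroup G) ≤ Subgroup.comap π B := by
        show Pn n (gammaN n j) ≤ Subgroup.comap π B
        refine Pn_le (hBnorm.comap π) ?_ ?_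
        · intro h hh
          obtain ⟨b, hb⟩ := ih h hh
          refine Subgroup.mem_comap.2 ((hBmem _).2 ⟨b, ?_⟩)
          rw [map_pow, hb, ← pow_mul, ← pow_succ]
        · intro h _ g
          refine Subgroup.mem_comap.2 ((hBmem _).2 ⟨1, ?_⟩)
          rw [one_pow]
          exact (hπker _).2 (hder (Subgroup.commutator_mem_commutator
            (Subgroup.mem_top _) (Subgroup.mem_top _)))
      obtain ⟨b, hb⟩ := (hBmem _).1 (Subgroup.mem_comap.1 (hle hx))
      exact ⟨b, hb⟩
  -- image of Pn n H consists of n-th powers of images of H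
  have hPnpow : ∀ H : Subgroup G, ∀ k ∈ Pn n H, ∃ h ∈ H, π k = (π h) ^ n := by
    intro H
    have hBex : ∃ B : Subgroup (G ⧸ M),
        (∀ q, q ∈ B ↔ ∃ h ∈ H, q = (π h) ^ n) ∧ B.Normal := by
      refine ⟨{ carrier := {q | ∃ h ∈ H, q = (π h) ^ n}
                one_mem' := ⟨1, H.one_mem, by simp⟩
                mul_mem' := ?_
                inv_mem' := ?_ }, fun q => Iff.rfl, ?_⟩
      · rintro a a' ⟨h, hh, rfl⟩ ⟨h', hh', rfl⟩
        refine ⟨h * h', H.mul_mem hh hh', ?_⟩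
        rw [map_mul, ((show Commute (π h) (π h') from hcommA _ _).mul_pow _)]
      · rintro a ⟨h, hh, rfl⟩
        exact ⟨h⁻¹, H.inv_mem hh, by rw [map_inv, inv_pow]⟩
      · constructor
        rintro q ⟨h, hh, rfl⟩ g
        have : g * (π h) ^ n * g⁻¹ = (π h) ^ n := by
          rw [hcommA g _, mul_inv_cancel_right]
        rw [this]
        exact ⟨h, hh, rfl⟩
    obtain ⟨B, hBmem, hBnorm⟩ := hBex
    intro k hk
    have hle : Pn n H ≤ Subgroup.comap π B := by
      refine Pn_le (hBnorm.comap π) ?_ ?_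
      · intro h hh
        exact Subgroup.mem_comap.2 ((hBmem _).2 ⟨h, hh, by rw [map_pow]⟩)
      · intro h _ g
        refine Subgroup.mem_comap.2 ((hBmem _).2 ⟨1, H.one_mem, ?_⟩)
        rw [map_one, one_pow]
        exact (hπker _).2 (hder (Subgroup.commutator_mem_commutator
          (Subgroup.mem_top _) (Subgroup.mem_top _)))
    exact (hBmem _).1 (Subgroup.mem_comap.1 (hle hk))
  -- Part 1
  have hMInM : ∀ j, MIn n M j ≤ M := by
    intro j
    induction j with
    | zero => exact le_rfl
    | succ j ih =>
      refine Pn_le (inferInstance : M.Normal) ?_ ?_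
      · intro h hh; exact M.pow_mem (ih hh) n
      · intro h _ g
        exact hder (Subgroup.commutator_mem_commutator (Subgroup.mem_top _)
          (Subgroup.mem_top _))
  have part1 : ∀ j, MIn n M j ≤ gammaN n j ⊓ M := by
    intro j
    induction j with
    | zero => exact le_inf le_top le_rfl
    | succ j ih =>
      refine le_inf ?_ (hMInM (j + 1))
      show Pn n (MIn n M j) ≤ Pn n (gammaN n j)
      exact Pn_mono (le_trans ih inf_le_left)
  -- Part 2
  have part2 : ∀ j, gammaN n (2 * j + T) ⊓ M ≤ MIn n M j := by
    intro j
    induction j with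
    | zero =>
      exact (inf_le_right : gammaN n (2 * 0 + T) ⊓ M ≤ M)
    | succ j ih =>
      have hidx : 2 * (j + 1) + T = (2 * j + T) + 2 := by omega
      rw [hidx]
      set H := (gammaN n (2 * j + T) : Subgroup G) with hHdef
      haveI hHn : H.Normal := hgammaNorm _
      have hkey : Pn n (Pn n H) ⊓ M ≤ Pn n (H ⊓ M) := by
        refine keyL n M hder H hHn (hPnpow H) ?_
        intro h hh hpow
        obtain ⟨b, hb⟩ := hgamma (2 * j + T) h hh
        rw [hb, ← pow_mul, ← pow_add] at hpow
        have he : 2 * j + T + 2 = T + (2 * j + 2) := by omega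
        rw [he] at hpow
        have hbT : b ^ n ^ T = 1 := hstab _ b hpow
        have : π h = 1 := by
          rw [hb]
          have h2 : 2 * j + T = T + 2 * j := by omega
          rw [h2, pow_add, pow_mul, hbT, one_pow]
        exact (hπker _).1 this
      have hstep : (gammaN n ((2 * j + T) + 2) : Subgroup G) = Pn n (Pn n H) := rfl
      rw [hstep]
      calc Pn n (Pn n H) ⊓ M ≤ Pn n (H ⊓ M) := hkey
        _ ≤ Pn n (MIn n M j) := Pn_mono ih
        _ = MIn n M (j + 1) := rfl
  exact ⟨part1 i, part2 i⟩
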